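/- Let P ⊆ ℝⁿ be a compact convex set with nonempty interior. Then A_P(V) lies in the interior of P for every V ∈ ℝⁿ, and the closure of the image {A_P(V) : V ∈ ℝⁿ} equals P. -/

import Mathlib

set_option maxHeartbeats 1000000
set_option synthInstance.maxHeartbeats 400000

open scoped RealInnerProductSpace
open MeasureTheory

/-- The `V`-weighted volume `Vol_V(P) = ∫_P e^{⟨V,p⟩} dp`. -/
noncomputable def weightedVol {n : ℕ} (P : Set (EuclideanSpace ℝ (Fin n)))
    (V : EuclideanSpace ℝ (Fin n)) : ℝ :=
  ∫ p in P, Real.exp ⟪V, p⟫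

/-- The weighted barycenter `A_P(V) = Vol_V(P)⁻¹ ∫_P p e^{⟨V,p⟩} dp`. -/
noncomputable def weightedBary {n : ℕ} (P : Set (EuclideanSpace ℝ (Fin n)))
    (V : EuclideanSpace ℝ (Fin n)) : EuclideanSpace ℝ (Fin n) :=
  (weightedVol P V)⁻¹ • ∫ p in P, Real.exp ⟪V, p⟫ • p

section Aux

open Metric Set Filter

variable {n : ℕ} {P : Set (EuclideanSpace ℝ (Fin n))}

local notation "E" => EuclideanSpace ℝ (Fin n)

private lemma contExp (V : E) : Continuous fun p : E => Real.exp ⟪V, p⟫ :=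
  Real.continuous_exp.comp (continuous_const.inner continuous_id)

private lemma intExp (hPcpt : IsCompact P) (V : E) :
    IntegrableOn (fun p : E => Real.exp ⟪V, p⟫) P volume :=
  (contExp V).continuousOn.integrableOn_compact hPcpt

private lemma intSmul (hPcpt : IsCompact P) (V : E) :
    IntegrableOn (fun p : E => Real.exp ⟪V, p⟫ • p) P volume :=
  ((contExp V).smul continuous_id).continuousOn.integrableOn_compact hPcpt

private lemma vol_pos (hPcpt : IsCompact P) (hPint : (interior P).Nonempty) (V : E) :
    0 < weightedVol P V := by
  rw [weightedVol, setIntegral_pos_iff_support_of_nonneg_ae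
    (Filter.Eventually.of_forall fun p => (Real.exp_pos _).le) (intExp hPcpt V)]
  have hsupp : (Function.support fun p : E => Real.exp ⟪V, p⟫) = Set.univ := by
    ext p; simp [Function.mem_support, Real.exp_ne_zero]
  rw [hsupp, Set.univ_inter]
  exact Measure.measure_pos_of_nonempty_interior _ hPint

private lemma f_bary (hPcpt : IsCompact P) (f : E →L[ℝ] ℝ) (V : E) :
    f (weightedBary P V) = (weightedVol P V)⁻¹ * ∫ p in P, Real.exp ⟪V, p⟫ * f p := by
  rw [weightedBary, _root_.map_smul, smul_eq_mul,
    ← ContinuousLinearMap.integral_comp_comm f (intSmul hPcpt V)]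
  congr 1
  refine setIntegral_congr_fun hPcpt.isClosed.measurableSet fun p _ => ?_
  simp [smul_eq_mul]

private lemma bary_lt (hPcpt : IsCompact P) (hPint : (interior P).Nonempty)
    (f : E →L[ℝ] ℝ) {c : ℝ} (hle : ∀ p ∈ P, f p ≤ c) {q : E} (hq : q ∈ interior P)
    (hqc : f q < c) (V : E) : f (weightedBary P V) < c := by
  have hv := vol_pos hPcpt hPint V
  have hPm : MeasurableSet P := hPcpt.isClosed.measurableSet
  have hint : IntegrableOn (fun p : E => Real.exp ⟪V, p⟫ * (c - f p)) P volume :=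
    ((contExp V).mul (continuous_const.sub f.continuous)).continuousOn.integrableOn_compact hPcpt
  have key : 0 < ∫ p in P, Real.exp ⟪V, p⟫ * (c - f p) := by
    rw [setIntegral_pos_iff_support_of_nonneg_ae ?_ hint]
    · refine lt_of_lt_of_le (IsOpen.measure_pos volume
        (isOpen_interior.inter (isOpen_lt f.continuous continuous_const)) ⟨q, hq, hqc⟩)
        (measure_mono ?_)
      rintro p ⟨hp1, hp2⟩
      refine ⟨?_, interior_subset hp1⟩
      have : (0:ℝ) < Real.exp ⟪V, p⟫ * (c - f p) :=
        mul_pos (Real.exp_pos _) (sub_pos.2 hp2)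
      exact fun h => this.ne' h
    · rw [EventuallyLE, ae_restrict_iff' hPm]
      exact Filter.Eventually.of_forall fun p hp =>
        mul_nonneg (Real.exp_pos _).le (sub_nonneg.2 (hle p hp))
  have hint2 : IntegrableOn (fun p : E => Real.exp ⟪V, p⟫ * f p) P volume :=
    ((contExp V).mul f.continuous).continuousOn.integrableOn_compact hPcpt
  have hexp : ∫ p in P, Real.exp ⟪V, p⟫ * (c - f p)
      = c * weightedVol P V - ∫ p in P, Real.exp ⟪V, p⟫ * f p := by
    have heq : ∀ p : E, Real.exp ⟪V, p⟫ * (c - f p)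
        = c * Real.exp ⟪V, p⟫ - Real.exp ⟪V, p⟫ * f p := fun p => by ring
    simp_rw [heq]
    rw [integral_sub ((intExp hPcpt V).const_mul c) hint2, integral_const_mul]
    rfl
  rw [hexp] at key
  rw [f_bary hPcpt, inv_mul_lt_iff₀ hv, mul_comm]
  linarith

private lemma subset_closure_int (hPconv : Convex ℝ P) (hPint : (interior P).Nonempty) :
    P ⊆ closure (interior P) := by
  obtain ⟨y, hy⟩ := id hPint
  intro p hp
  have hlim : Filter.Tendsto (fun k : ℕ => p + (1 / ((k : ℝ) + 1)) • (y - p))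
      Filter.atTop (nhds p) := by
    have h0 := tendsto_one_div_add_atTop_nhds_zero_nat (𝕜 := ℝ)
    have := tendsto_const_nhds (x := p) (f := Filter.atTop (α := ℕ)) |>.add
      (h0.smul_const (y - p))
    simpa using this
  refine mem_closure_of_tendsto hlim (Filter.Eventually.of_forall fun k => ?_)
  refine hPconv.add_smul_sub_mem_interior hp hy ⟨by positivity, ?_⟩
  rw [div_le_one (by positivity)]
  linarith [Nat.cast_nonneg (α := ℝ) k]

private lemma bary_mem_interior (hPcpt : IsCompact P) (hPconv : Convex ℝ P)
    (hPint : (interior P).Nonempty) (V : E) : weightedBary P V ∈ interior P := by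
  by_contra hb
  obtain ⟨f, hf⟩ := geometric_hahn_banach_open_point hPconv.interior isOpen_interior hb
  have hsub : P ⊆ closure (interior P) := subset_closure_int hPconv hPint
  have hle : ∀ p ∈ P, f p ≤ f (weightedBary P V) := fun p hp =>
    closure_minimal (fun a ha => (hf a ha).le)
      (isClosed_le f.continuous continuous_const) (hsub hp)
  obtain ⟨q, hq⟩ := id hPint
  exact lt_irrefl _ (bary_lt hPcpt hPint f hle hq (hf q hq) V)

private lemma inner_hasFDeriv (p V : E) :
    HasFDerivAt (fun V : E => ⟪V, p⟫) (innerSL ℝ p) V := by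
  have h : (fun V : E => ⟪V, p⟫) = fun V : E => (innerSL ℝ p) V := by
    funext W
    rw [innerSL_apply_apply]
    exact (real_inner_comm W p).symm
  rw [h]
  exact (innerSL ℝ p).hasFDerivAt

private lemma hasFDeriv_vol (hPcpt : IsCompact P) (V₀ : E) :
    HasFDerivAt (weightedVol P)
      (∫ p in P, Real.exp ⟪V₀, p⟫ • (innerSL ℝ p : E →L[ℝ] ℝ)) V₀ := by
  have hPm : MeasurableSet P := hPcpt.isClosed.measurableSet
  obtain ⟨R₀, hR₀⟩ := hPcpt.isBounded.exists_norm_le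
  set R : ℝ := max R₀ 0 with hRdef
  have hR : ∀ p ∈ P, ‖p‖ ≤ R := fun p hp => (hR₀ p hp).trans (le_max_left _ _)
  have hR0 : 0 ≤ R := le_max_right _ _
  have key : ∀ (V p : E), HasFDerivAt (fun V : E => Real.exp ⟪V, p⟫)
      (Real.exp ⟪V, p⟫ • (innerSL ℝ p : E →L[ℝ] ℝ)) V := fun V p =>
    (inner_hasFDeriv p V).exp
  have := hasFDerivAt_integral_of_dominated_of_fderiv_le
      (μ := volume.restrict P) (𝕜 := ℝ)
      (F := fun (V p : E) => Real.exp ⟪V, p⟫)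
      (F' := fun (V p : E) => Real.exp ⟪V, p⟫ • (innerSL ℝ p : E →L[ℝ] ℝ))
      (bound := fun _ => Real.exp ((‖V₀‖ + 1) * R) * R)
      (x₀ := V₀) (Metric.ball_mem_nhds V₀ one_pos)
      (Filter.Eventually.of_forall fun V => (contExp V).aestronglyMeasurable)
      (intExp hPcpt V₀)
      (((contExp V₀).smul (innerSL ℝ).continuous).aestronglyMeasurable)
      ?_ ?_ (Filter.Eventually.of_forall fun p V _ => key V p)
  · exact this
  · rw [ae_restrict_iff' hPm]
    refine Filter.Eventually.of_forall fun p hp V hV => ?_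
    have h1 : ‖V - V₀‖ < 1 := mem_ball_iff_norm.1 hV
    have h2 : ‖V‖ ≤ ‖V₀‖ + 1 := by
      have := norm_sub_norm_le V V₀
      linarith
    have h3 : ⟪V, p⟫ ≤ (‖V₀‖ + 1) * R := by
      refine (real_inner_le_norm V p).trans ?_
      exact mul_le_mul h2 (hR p hp) (norm_nonneg p) (by positivity)
    have h4 : ‖Real.exp ⟪V, p⟫ • (innerSL ℝ p : E →L[ℝ] ℝ)‖
        = Real.exp ⟪V, p⟫ * ‖p‖ := by
      rw [norm_smul (Real.exp ⟪V, p⟫) ((innerSL ℝ) p), innerSL_apply_norm, Real.norm_eq_abs,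
        abs_of_pos (Real.exp_pos _)]
    rw [h4]
    exact mul_le_mul (Real.exp_le_exp.2 h3) (hR p hp) (norm_nonneg p) (Real.exp_pos _).le
  · exact integrableOn_const hPcpt.measure_lt_top.ne

private lemma dense_step (hPcpt : IsCompact P) (hPconv : Convex ℝ P)
    (hPint : (interior P).Nonempty) {x : E} (hx : x ∈ interior P) :
    ∃ V, weightedBary P V = x := by
  classical
  set F : E → ℝ := fun V => Real.log (weightedVol P V) - ⟪V, x⟫ with hFdef
  have hFd : ∀ V : E, HasFDerivAt F
      ((weightedVol P V)⁻¹ • (∫ p in P, Real.exp ⟪V, p⟫ • (innerSL ℝ p : E →L[ℝ] ℝ))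
        - innerSL ℝ x) V := fun V =>
    ((hasFDeriv_vol hPcpt V).log (vol_pos hPcpt hPint V).ne').sub (inner_hasFDeriv x V)
  have hcont : Continuous F :=
    continuous_iff_continuousAt.2 fun V => (hFd V).differentiableAt.continuousAt
  obtain ⟨r, hr0, hrball⟩ := Metric.isOpen_iff.1 isOpen_interior x hx
  have hrP : ball x r ⊆ P := hrball.trans interior_subset
  set κ : ℝ := (volume (ball (0 : E) (r / 4))).toReal with hκdef
  have hκpos : 0 < κ := ENNReal.toReal_pos
    (IsOpen.measure_pos volume isOpen_ball (nonempty_ball.2 (by positivity))).ne'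
    (measure_ball_lt_top (x := (0 : EuclideanSpace ℝ (Fin n))) (r := r / 4)).ne
  have hlow : ∀ V : E, V ≠ 0 →
      Real.log κ + (⟪V, x⟫ + r / 4 * ‖V‖) ≤ Real.log (weightedVol P V) := by
    intro V hVne
    have hVn : 0 < ‖V‖ := norm_pos_iff.2 hVne
    set u : E := ‖V‖⁻¹ • V with hu
    have hun : ‖u‖ = 1 := by
      rw [hu, norm_smul, norm_inv, norm_norm, inv_mul_cancel₀ hVn.ne']
    set q : E := x + (r / 2) • u with hq
    have hball : ball q (r / 4) ⊆ P := by
      intro p hp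
      apply hrP
      have h1 : dist p q < r / 4 := mem_ball.1 hp
      have h2 : dist q x = r / 2 := by
        rw [hq, dist_eq_norm, add_sub_cancel_left, norm_smul, hun, Real.norm_eq_abs,
          abs_of_pos (by positivity : (0:ℝ) < r / 2), mul_one]
      have := dist_triangle p q x
      rw [mem_ball]
      linarith
    have hVu : ⟪V, u⟫ = ‖V‖ := by
      rw [hu, real_inner_smul_right, real_inner_self_eq_norm_sq, sq]
      field_simp
    have hinner : ∀ p ∈ ball q (r / 4), ⟪V, x⟫ + r / 4 * ‖V‖ ≤ ⟪V, p⟫ := by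
      intro p hp
      have hsplit : ⟪V, p⟫ = ⟪V, x⟫ + (⟪V, q - x⟫ + ⟪V, p - q⟫) := by
        rw [← inner_add_right, ← inner_add_right]
        congr 1
        abel
      have hqx : ⟪V, q - x⟫ = r / 2 * ‖V‖ := by
        rw [hq, add_sub_cancel_left, real_inner_smul_right, hVu]
      have habs : |⟪V, p - q⟫| ≤ ‖V‖ * ‖p - q‖ := abs_real_inner_le_norm V (p - q)
      have hpq : ‖p - q‖ ≤ r / 4 := by
        rw [← dist_eq_norm]; exact (mem_ball.1 hp).le
      have hlb : -(‖V‖ * (r / 4)) ≤ ⟪V, p - q⟫ := by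
        have h5 := neg_abs_le ⟪V, p - q⟫
        nlinarith [norm_nonneg V]
      rw [hsplit, hqx]
      nlinarith
    have hintball : IntegrableOn (fun p : E => Real.exp ⟪V, p⟫) (ball q (r / 4)) volume :=
      ((contExp V).continuousOn.integrableOn_compact (isCompact_closedBall q (r / 4))).mono_set
        ball_subset_closedBall
    have h1 : Real.exp (⟪V, x⟫ + r / 4 * ‖V‖) * (volume (ball q (r / 4))).toReal
        ≤ ∫ p in ball q (r / 4), Real.exp ⟪V, p⟫ :=
      setIntegral_ge_of_const_le_real measurableSet_ball
        (measure_ball_lt_top (x := q) (r := r / 4)).ne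
        (fun p hp => Real.exp_le_exp.2 (hinner p hp)) hintball
    have h2 : (∫ p in ball q (r / 4), Real.exp ⟪V, p⟫) ≤ weightedVol P V :=
      setIntegral_mono_set (intExp hPcpt V)
        (Filter.Eventually.of_forall fun p => (Real.exp_pos _).le)
        (HasSubset.Subset.eventuallyLE hball)
    have hballvol : (volume (ball q (r / 4))).toReal = κ := by
      rw [hκdef, Measure.addHaar_ball_center]
    rw [hballvol] at h1
    have hfin : Real.exp (⟪V, x⟫ + r / 4 * ‖V‖) * κ ≤ weightedVol P V := h1.trans h2
    calc Real.log κ + (⟪V, x⟫ + r / 4 * ‖V‖)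
        = Real.log (Real.exp (⟪V, x⟫ + r / 4 * ‖V‖) * κ) := by
          rw [Real.log_mul (Real.exp_ne_zero _) hκpos.ne', Real.log_exp]; ring
      _ ≤ Real.log (weightedVol P V) :=
          (Real.log_le_log_iff (by positivity) (vol_pos hPcpt hPint V)).2 hfin
  have hco : ∀ᶠ V in Filter.cocompact E, F 0 ≤ F V := by
    have hM := (tendsto_norm_cocompact_atTop :
      Filter.Tendsto norm (Filter.cocompact (EuclideanSpace ℝ (Fin n))) Filter.atTop).eventually_ge_atTop
      (max 1 ((F 0 - Real.log κ) / (r / 4)))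
    filter_upwards [hM] with V hV
    have h1 : (1 : ℝ) ≤ ‖V‖ := le_trans (le_max_left _ _) hV
    have hVne : V ≠ 0 := by
      intro h; rw [h, norm_zero] at h1; linarith
    have h2 := hlow V hVne
    have h3 : (F 0 - Real.log κ) / (r / 4) ≤ ‖V‖ := le_trans (le_max_right _ _) hV
    have h4 : F 0 - Real.log κ ≤ r / 4 * ‖V‖ := by
      rw [div_le_iff₀ (by positivity)] at h3
      linarith
    simp only [hFdef] at h4 ⊢
    linarith
  obtain ⟨V₀, hV₀⟩ := hcont.exists_forall_le' 0 hco
  have hmin : IsLocalMin F V₀ := Filter.Eventually.of_forall hV₀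
  have h0 := hmin.fderiv_eq_zero
  rw [(hFd V₀).fderiv] at h0
  refine ⟨V₀, ?_⟩
  have hintCLM : IntegrableOn
      (fun p : E => Real.exp ⟪V₀, p⟫ • (innerSL ℝ p : E →L[ℝ] ℝ)) P volume :=
    ((contExp V₀).smul (innerSL ℝ).continuous).continuousOn.integrableOn_compact hPcpt
  refine ext_inner_left ℝ fun W => ?_
  have happ := congrArg (fun L : E →L[ℝ] ℝ => L W) h0
  simp only [ContinuousLinearMap.sub_apply, ContinuousLinearMap.smul_apply,
    ContinuousLinearMap.zero_apply, innerSL_apply_apply, smul_eq_mul] at happ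
  have hDW : (∫ p in P, Real.exp ⟪V₀, p⟫ • (innerSL ℝ p : E →L[ℝ] ℝ)) W
      = ∫ p in P, Real.exp ⟪V₀, p⟫ * ⟪W, p⟫ := by
    rw [ContinuousLinearMap.integral_apply hintCLM]
    refine setIntegral_congr_fun hPcpt.isClosed.measurableSet fun p _ => ?_
    simp only [ContinuousLinearMap.smul_apply, innerSL_apply_apply, smul_eq_mul]
    rw [real_inner_comm W p]
  rw [hDW] at happ
  have hbary := f_bary hPcpt (innerSL ℝ W) V₀
  simp only [innerSL_apply_apply] at hbary
  rw [hbary]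
  have hx' : ⟪x, W⟫ = ⟪W, x⟫ := real_inner_comm W x
  linarith

end Aux

/-- `A_P(V)` lies in the interior of `P` for every `V`, and the closure of
the image `{A_P(V) : V ∈ ℝⁿ}` equals `P`. -/
theorem stmt2 {n : ℕ} (P : Set (EuclideanSpace ℝ (Fin n)))
    (hPcpt : IsCompact P) (hPconv : Convex ℝ P)
    (hPint : (interior P).Nonempty) :
    (∀ V, weightedBary P V ∈ interior P) ∧
      closure (Set.range fun V => weightedBary P V) = P := by
  refine ⟨fun V => bary_mem_interior hPcpt hPconv hPint V, ?_⟩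
  apply subset_antisymm
  · exact closure_minimal
      (Set.range_subset_iff.2 fun V => interior_subset (bary_mem_interior hPcpt hPconv hPint V))
      hPcpt.isClosed
  · intro p hp
    have h1 : interior P ⊆ Set.range fun V => weightedBary P V := by
      intro y hy
      obtain ⟨V, hV⟩ := dense_step hPcpt hPconv hPint hy
      exact ⟨V, hV⟩
    exact closure_mono h1 (subset_closure_int hPconv hPint hp)
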